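/- For the golden house GH = conv{(1,0),(−1,0),(1,−1),(−1,−1),(0,φ)}, the points (1,0) and (−1,0) lie on the boundaries of both GH and −GH, and the vertical slab {x : |x₁| ≤ 1} contains GH while its boundary hyperplanes support GH at (±1,0); consequently α(GH) = 1. -/

import Mathlib

open Set Pointwise

/-- `α(K)`: the smallest `ρ > 0` with `K ∩ (−K) ⊆ ρ · conv(K ∪ (−K))`. -/
noncomputable def alphaK {V : Type*} [AddCommGroup V] [Module ℝ V] (K : Set V) : ℝ :=
  sInf {ρ : ℝ | 0 < ρ ∧ K ∩ -K ⊆ ρ • convexHull ℝ (K ∪ -K)}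

/-- For the golden house `GH`, the points `(1,0)` and `(−1,0)` lie on the
boundaries of both `GH` and `−GH`, the vertical slab `{x : |x₁| ≤ 1}` contains `GH`
(its boundary lines supporting `GH` at `(±1,0)`, which belong to `GH`); consequently
`α(GH) = 1`. -/

lemma slab_convex : Convex ℝ {x : ℝ × ℝ | |x.1| ≤ 1} := by
  have : {x : ℝ × ℝ | |x.1| ≤ 1} = (LinearMap.fst ℝ ℝ ℝ) ⁻¹' (Icc (-1:ℝ) 1) := by
    ext x; simp [abs_le]
  rw [this]
  exact (convex_Icc _ _).linear_preimage _

lemma not_interior {S : Set (ℝ × ℝ)} (hS : ∀ x ∈ S, |x.1| ≤ 1) (p : ℝ × ℝ)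
    (hp : |p.1| = 1) : p ∉ interior S := by
  intro h
  obtain ⟨ε, hε, hball⟩ := Metric.isOpen_iff.mp isOpen_interior p h
  set δ : ℝ := if p.1 = 1 then ε/2 else -(ε/2) with hδ
  have hδabs : |δ| = ε/2 := by
    rw [hδ]; split <;> simp [abs_of_pos, abs_of_neg, hε, half_pos hε, (half_pos hε).le,
      abs_of_nonneg]
  have hq : (p.1 + δ, p.2) ∈ Metric.ball p ε := by
    simp only [Metric.mem_ball, Prod.dist_eq, Real.dist_eq]
    simp only [add_sub_cancel_left, sub_self, abs_zero]
    rw [hδabs]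
    simp only [max_lt_iff]; constructor <;> linarith
  have hle := hS _ (interior_subset (hball hq))
  simp only at hle
  rcases (abs_eq (by norm_num : (0:ℝ) ≤ 1)).mp hp with h1 | h1
  · rw [hδ, if_pos h1, h1] at hle
    rw [abs_of_pos (by linarith)] at hle; linarith
  · have : p.1 ≠ 1 := by rw [h1]; norm_num
    rw [hδ, if_neg this, h1] at hle
    rw [abs_of_neg (by linarith)] at hle; linarith

theorem goldenHouse_alpha_eq_one :
    let φ : ℝ := (1 + Real.sqrt 5) / 2
    let GH : Set (ℝ × ℝ) :=
      convexHull ℝ {((1 : ℝ), (0 : ℝ)), (-1, 0), (1, -1), (-1, -1), (0, φ)}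
    ((1 : ℝ), (0 : ℝ)) ∈ frontier GH ∩ frontier (-GH) ∧
      ((-1 : ℝ), (0 : ℝ)) ∈ frontier GH ∩ frontier (-GH) ∧
      (∀ x ∈ GH, |x.1| ≤ 1) ∧
      ((1 : ℝ), (0 : ℝ)) ∈ GH ∧ ((-1 : ℝ), (0 : ℝ)) ∈ GH ∧
      alphaK GH = 1 := by
  intro φ GH
  -- GH ⊆ slab
  have hslab : ∀ x ∈ GH, |x.1| ≤ 1 := by
    intro x hx
    have : GH ⊆ {x : ℝ × ℝ | |x.1| ≤ 1} := by
      apply convexHull_min _ slab_convex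
      intro y hy
      simp only [mem_insert_iff, mem_singleton_iff] at hy
      rcases hy with rfl | rfl | rfl | rfl | rfl <;> simp
    exact this hx
  have hnslab : ∀ x ∈ -GH, |x.1| ≤ 1 := by
    intro x hx
    have := hslab (-x) (Set.mem_neg.mp hx)
    simpa using this
  -- memberships
  have h1 : ((1:ℝ), (0:ℝ)) ∈ GH := subset_convexHull ℝ _ (by simp)
  have h2 : ((-1:ℝ), (0:ℝ)) ∈ GH := subset_convexHull ℝ _ (by simp)
  have h1n : ((1:ℝ), (0:ℝ)) ∈ -GH := by
    rw [Set.mem_neg]; simpa using h2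
  have h2n : ((-1:ℝ), (0:ℝ)) ∈ -GH := by
    rw [Set.mem_neg]; simpa using h1
  -- closedness
  have hfin : ({((1 : ℝ), (0 : ℝ)), (-1, 0), (1, -1), (-1, -1), (0, φ)} : Set (ℝ × ℝ)).Finite :=
    Set.toFinite _
  have hcpt : IsCompact GH := hfin.isCompact_convexHull (𝕜 := ℝ)
  have hcl : IsClosed GH := hcpt.isClosed
  have hcln : IsClosed (-GH) := hcl.neg
  have hfr : ∀ p : ℝ × ℝ, |p.1| = 1 → p ∈ GH → p ∈ -GH →
      p ∈ frontier GH ∩ frontier (-GH) := by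
    intro p hp hpG hpN
    constructor
    · rw [frontier, hcl.closure_eq]
      exact ⟨hpG, not_interior hslab p hp⟩
    · rw [frontier, hcln.closure_eq]
      exact ⟨hpN, not_interior hnslab p hp⟩
  refine ⟨hfr _ (by norm_num) h1 h1n, hfr _ (by norm_num) h2 h2n, hslab, h1, h2, ?_⟩
  -- alphaK = 1
  have hCslab : convexHull ℝ (GH ∪ -GH) ⊆ {x : ℝ × ℝ | |x.1| ≤ 1} := by
    apply convexHull_min _ slab_convex
    rintro y (hy | hy)
    · exact hslab y hy
    · exact hnslab y hy
  have hmem1 : (1:ℝ) ∈ {ρ : ℝ | 0 < ρ ∧ GH ∩ -GH ⊆ ρ • convexHull ℝ (GH ∪ -GH)} := by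
    refine ⟨one_pos, ?_⟩
    rw [one_smul]
    exact (inter_subset_left).trans ((subset_union_left).trans (subset_convexHull ℝ _))
  have hlb' : ∀ ρ ∈ {ρ : ℝ | 0 < ρ ∧ GH ∩ -GH ⊆ ρ • convexHull ℝ (GH ∪ -GH)}, (1:ℝ) ≤ ρ := by
    rintro ρ ⟨hρ, hsub⟩
    have : ((1:ℝ), (0:ℝ)) ∈ ρ • convexHull ℝ (GH ∪ -GH) := hsub ⟨h1, h1n⟩
    obtain ⟨c, hc, hce⟩ := this
    have habs : |c.1| ≤ 1 := hCslab hc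
    have h1eq : ρ * c.1 = 1 := by
      have := congrArg Prod.fst hce
      simpa using this
    rw [abs_le] at habs
    nlinarith
  unfold alphaK
  exact le_antisymm (csInf_le ⟨1, hlb'⟩ hmem1) (le_csInf ⟨1, hmem1⟩ hlb')
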